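/- Let p be an odd prime, m and k positive integers with gcd(m, k) = 1 and gcd(m, p-1) = 1. Then gcd(p^{2k} - 1, 2(p^m - 1)/(p-1)) = 2. -/
import Mathlib


theorem stmt_1 (p m k : ℕ) (hp : p.Prime) (hodd : Odd p)
    (hm : 0 < m) (hk : 0 < k) (hmk : Nat.gcd m k = 1)
    (hmp : Nat.gcd m (p - 1) = 1) :
    Nat.gcd (p ^ (2 * k) - 1) (2 * (p ^ m - 1) / (p - 1)) = 2 := by
  have hp1 : 1 < p := hp.one_lt
  have hppos : 0 < p - 1 := by omega
  set n : ℕ := (p ^ m - 1) / (p - 1) with hn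
  have hpm1 : 1 ≤ p ^ m := Nat.one_le_pow _ _ (by omega)
  have hp2k1 : 1 ≤ p ^ (2 * k) := Nat.one_le_pow _ _ (by omega)
  -- geometric sum
  have hsum : (p - 1) * (∑ i ∈ Finset.range m, p ^ i) = p ^ m - 1 := by
    have h := geom_sum_mul (p : ℤ) m
    have : ((p - 1 : ℕ) : ℤ) * ((∑ i ∈ Finset.range m, p ^ i : ℕ) : ℤ)
        = ((p ^ m - 1 : ℕ) : ℤ) := by
      push_cast [Nat.cast_sub hp1.le, Nat.cast_sub hpm1]
      rw [mul_comm]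
      exact h
    exact_mod_cast this
  have hdvd : (p - 1) ∣ p ^ m - 1 := ⟨_, hsum.symm⟩
  have hneq : n = ∑ i ∈ Finset.range m, p ^ i := by
    rw [hn, ← hsum, Nat.mul_div_cancel_left _ hppos]
  have hndvd : n ∣ p ^ m - 1 := by
    refine ⟨p - 1, ?_⟩
    rw [hneq, mul_comm, hsum]
  -- m is odd
  have hm2 : Nat.Coprime m 2 := by
    have h2 : 2 ∣ p - 1 := by
      obtain ⟨t, ht⟩ := hodd
      omega
    exact Nat.Coprime.coprime_dvd_right h2 hmp
  -- n ≡ m [MOD p-1]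
  have hnm : n ≡ m [MOD p - 1] := by
    rw [← ZMod.natCast_eq_natCast_iff, hneq]
    have hpcast : ((p : ZMod (p - 1))) = 1 := by
      have h0 : ((p - 1 : ℕ) : ZMod (p - 1)) = 0 := ZMod.natCast_self _
      have hpe : p = (p - 1) + 1 := by omega
      rw [hpe]
      push_cast [h0]
      ring
    push_cast
    simp [hpcast]
  -- Coprime n (p-1)
  have hcop1 : Nat.Coprime n (p - 1) := by
    have hdm : Nat.gcd n (p - 1) ∣ m :=
      (Nat.ModEq.dvd_iff hnm (Nat.gcd_dvd_right _ _)).mp (Nat.gcd_dvd_left _ _)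
    have := Nat.dvd_gcd hdm (Nat.gcd_dvd_right n (p - 1))
    rw [hmp] at this
    exact Nat.eq_one_of_dvd_one this
  -- Coprime (p^(2k)-1) n
  have hcop2 : Nat.Coprime (p ^ (2 * k) - 1) n := by
    set d : ℕ := Nat.gcd (p ^ (2 * k) - 1) n with hd
    have hd1 : d ∣ p ^ (2 * k) - 1 := Nat.gcd_dvd_left _ _
    have hd2 : d ∣ p ^ m - 1 := (Nat.gcd_dvd_right _ _).trans hndvd
    have hdn : d ∣ n := Nat.gcd_dvd_right _ _
    -- p^(2k) ≡ 1 and p^m ≡ 1 mod d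
    have he1 : ((p : ZMod d)) ^ (2 * k) = 1 := by
      have : (p ^ (2 * k)) ≡ 1 [MOD d] :=
        (Nat.modEq_iff_dvd' hp2k1).mpr hd1 |>.symm
      have := (ZMod.natCast_eq_natCast_iff _ _ _).mpr this
      push_cast at this
      exact this
    have he2 : ((p : ZMod d)) ^ m = 1 := by
      have : (p ^ m) ≡ 1 [MOD d] :=
        (Nat.modEq_iff_dvd' hpm1).mpr hd2 |>.symm
      have := (ZMod.natCast_eq_natCast_iff _ _ _).mpr this
      push_cast at this
      exact this
    have ho1 : orderOf ((p : ZMod d)) ∣ 2 * k := orderOf_dvd_of_pow_eq_one he1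
    have ho2 : orderOf ((p : ZMod d)) ∣ m := orderOf_dvd_of_pow_eq_one he2
    have hgcd : Nat.gcd m (2 * k) = 1 := Nat.Coprime.mul_right hm2 hmk
    have ho : orderOf ((p : ZMod d)) ∣ 1 := by
      have := Nat.dvd_gcd ho2 ho1
      rwa [hgcd] at this
    have hpone : ((p : ZMod d)) = 1 := orderOf_eq_one_iff.mp (Nat.eq_one_of_dvd_one ho)
    have hmodp : p ≡ 1 [MOD d] := by
      rw [← ZMod.natCast_eq_natCast_iff]
      push_cast
      exact hpone
    have hdp : d ∣ p - 1 := (Nat.modEq_iff_dvd' hp1.le).mp hmodp.symm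
    have : d ∣ Nat.gcd n (p - 1) := Nat.dvd_gcd hdn hdp
    rw [hcop1] at this
    exact Nat.eq_one_of_dvd_one this
  -- finish
  have h2n : 2 * (p ^ m - 1) / (p - 1) = 2 * n := Nat.mul_div_assoc 2 hdvd
  rw [h2n]
  have hcancel : Nat.gcd (p ^ (2 * k) - 1) (2 * n) = Nat.gcd (p ^ (2 * k) - 1) 2 := by
    exact Nat.Coprime.gcd_mul_right_cancel_right 2 hcop2.symm
  rw [hcancel]
  have h2dvd : 2 ∣ p ^ (2 * k) - 1 := by
    have hodd' : Odd (p ^ (2 * k)) := hodd.pow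
    obtain ⟨t, ht⟩ := hodd'
    omega
  rw [Nat.gcd_comm]
  exact Nat.gcd_eq_left h2dvd
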